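/- Fix nonnegative integers k, x₀, ℓ with 2k ≤ ℓ. For y with 0 ≤ y < ℓ − 2x₀, let z = ℓ − x₀ − y, s(y) = max(⌈(2k+1−y)/2⌉, 1), and define F(y) = Σ_{i=s(y)}^{x₀} Σ_{j=2k+1−2i}^{2k−i} (x₀ choose i)·(y choose j)·(z choose (2k−i−j)) (binomials are 0 for out-of-range indices). Then F(y) ≤ F(y+1). -/

import Mathlib

/-- Binomial coefficient on integers: `0` when the lower index is negative or
exceeds the upper index. -/
def ichoose (p q : ℤ) : ℤ :=
  if q < 0 ∨ p < q then 0 else (p.toNat).choose q.toNat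

/-- With `z = ℓ−x₀−y` and `s(y) = max(⌈(2k+1−y)/2⌉, 1)`:
`F(y) = Σ_{i=s(y)}^{x₀} Σ_{j=2k+1−2i}^{2k−i} (x₀ choose i)(y choose j)(z choose 2k−i−j)`. -/
noncomputable def F (k x₀ ℓ y : ℕ) : ℤ :=
  ∑ i ∈ Finset.Icc (max (((2 * k + 1 : ℤ) - y + 1) / 2) 1) (x₀ : ℤ),
    ∑ j ∈ Finset.Icc ((2 * k + 1 : ℤ) - 2 * i) ((2 * k : ℤ) - i),
      ichoose x₀ i * ichoose y j * ichoose ((ℓ : ℤ) - x₀ - y) ((2 * k : ℤ) - i - j)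

lemma ichoose_nonneg (p q : ℤ) : 0 ≤ ichoose p q := by
  unfold ichoose; split
  · exact le_rfl
  · positivity

lemma ichoose_neg (p q : ℤ) (h : q < 0) : ichoose p q = 0 := by
  unfold ichoose; rw [if_pos (Or.inl h)]

lemma ichoose_natCast (n : ℕ) (q : ℤ) :
    ichoose n q = if q < 0 then 0 else ((n.choose q.toNat : ℕ) : ℤ) := by
  unfold ichoose
  by_cases hq : q < 0
  · simp [hq]
  · rw [if_neg hq]
    by_cases h : (n : ℤ) < q
    · rw [if_pos (Or.inr h), Nat.choose_eq_zero_of_lt (by omega)]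
      simp
    · rw [if_neg (by tauto)]
      simp

lemma ichoose_succ (p q : ℤ) (hp : 0 ≤ p) :
    ichoose (p + 1) q = ichoose p q + ichoose p (q - 1) := by
  lift p to ℕ using hp
  rw [show ((p : ℤ) + 1) = ((p + 1 : ℕ) : ℤ) by push_cast; ring,
    ichoose_natCast, ichoose_natCast, ichoose_natCast]
  by_cases hq : q < 0
  · simp [hq, show q - 1 < 0 by omega]
  · by_cases hq0 : q = 0
    · simp [hq0]
    · rw [if_neg hq, if_neg hq, if_neg (by omega)]
      have h1 : q.toNat = (q - 1).toNat + 1 := by omega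
      rw [h1, Nat.choose_succ_succ]
      push_cast; ring

lemma Icc_int_succ_top (a n : ℤ) (h : a ≤ n + 1) :
    Finset.Icc a (n + 1) = insert (n + 1) (Finset.Icc a n) := by
  ext x
  simp only [Finset.mem_Icc, Finset.mem_insert]
  omega

lemma telescope (h : ℤ → ℤ) (a : ℤ) :
    ∀ b, a - 1 ≤ b → ∑ j ∈ Finset.Icc a b, (h j - h (j + 1)) = h a - h (b + 1) := by
  intro b hb
  refine Int.le_induction (m := a - 1)
    (motive := fun b _ => ∑ j ∈ Finset.Icc a b, (h j - h (j + 1)) = h a - h (b + 1)) ?_ ?_ b hb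
  · show ∑ j ∈ Finset.Icc a (a - 1), (h j - h (j + 1)) = h a - h (a - 1 + 1)
    rw [Finset.Icc_eq_empty (by omega), Finset.sum_empty, show a - 1 + 1 = a by ring, sub_self]
  · intro n hn ih
    show ∑ j ∈ Finset.Icc a (n + 1), (h j - h (j + 1)) = h a - h (n + 1 + 1)
    rw [Icc_int_succ_top a n (by omega), Finset.sum_insert (by simp), ih]
    ring

lemma inner_step (c i y' z' : ℤ) (hy' : 0 ≤ y') (hz' : 0 ≤ z') (hi : 0 ≤ i) :
    ∑ j ∈ Finset.Icc (c + 1 - 2 * i) (c - i), ichoose (y' + 1) j * ichoose z' (c - i - j)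
      = (∑ j ∈ Finset.Icc (c + 1 - 2 * i) (c - i),
          ichoose y' j * ichoose (z' + 1) (c - i - j))
        + ichoose y' (c - 2 * i) * ichoose z' (i - 1) := by
  have key : ∀ j : ℤ,
      ichoose (y' + 1) j * ichoose z' (c - i - j)
        - ichoose y' j * ichoose (z' + 1) (c - i - j)
      = (fun j => ichoose y' (j - 1) * ichoose z' (c - i - j)) j
        - (fun j => ichoose y' (j - 1) * ichoose z' (c - i - j)) (j + 1) := by
    intro j
    beta_reduce
    rw [ichoose_succ _ _ hy', ichoose_succ _ _ hz',
      show c - i - (j + 1) = c - i - j - 1 by ring]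
    ring
  have tel := telescope (fun j => ichoose y' (j - 1) * ichoose z' (c - i - j))
    (c + 1 - 2 * i) (c - i) (by omega)
  have hsub : ∑ j ∈ Finset.Icc (c + 1 - 2 * i) (c - i),
      (ichoose (y' + 1) j * ichoose z' (c - i - j)
        - ichoose y' j * ichoose (z' + 1) (c - i - j))
      = ichoose y' (c - 2 * i) * ichoose z' (i - 1) := by
    rw [Finset.sum_congr rfl (fun j _ => key j), tel]
    beta_reduce
    rw [show c + 1 - 2 * i - 1 = c - 2 * i by ring,
      show c - i - (c + 1 - 2 * i) = i - 1 by ring,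
      show c - i - (c - i + 1) = -1 by ring,
      ichoose_neg z' (-1) (by norm_num), mul_zero, sub_zero]
  rw [Finset.sum_sub_distrib] at hsub
  linarith

theorem stmt_6 (k x₀ ℓ y : ℕ) (hkℓ : 2 * k ≤ ℓ)
    (hy : y + 2 * x₀ < ℓ) :
    F k x₀ ℓ y ≤ F k x₀ ℓ (y + 1) := by
  unfold F
  push_cast
  have hz : (0 : ℤ) ≤ (ℓ : ℤ) - x₀ - y - 1 := by omega
  have hss : max (((2 * k : ℤ) + 1 - (y + 1) + 1) / 2) 1
      ≤ max (((2 * k : ℤ) + 1 - y + 1) / 2) 1 := by omega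
  refine le_trans ?_ (Finset.sum_le_sum_of_subset_of_nonneg
    (Finset.Icc_subset_Icc_left hss) ?_)
  · apply Finset.sum_le_sum
    intro i hi
    simp only [Finset.mem_Icc] at hi
    have hi0 : (0 : ℤ) ≤ i := by
      have := le_trans (le_max_right _ _) hi.1; omega
    have step := inner_step (2 * k : ℤ) i (y : ℤ) ((ℓ : ℤ) - x₀ - y - 1)
      (by positivity) hz hi0
    rw [show ((ℓ : ℤ) - x₀ - y - 1 + 1) = (ℓ : ℤ) - x₀ - y by ring] at step
    have l1 : ∑ j ∈ Finset.Icc ((2 * k : ℤ) + 1 - 2 * i) ((2 * k : ℤ) - i),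
        ichoose x₀ i * ichoose y j * ichoose ((ℓ : ℤ) - x₀ - y) ((2 * k : ℤ) - i - j)
        = ichoose x₀ i * ∑ j ∈ Finset.Icc ((2 * k : ℤ) + 1 - 2 * i) ((2 * k : ℤ) - i),
            ichoose y j * ichoose ((ℓ : ℤ) - x₀ - y) ((2 * k : ℤ) - i - j) := by
      rw [Finset.mul_sum]
      exact Finset.sum_congr rfl fun j _ => by ring
    have r1 : ∑ j ∈ Finset.Icc ((2 * k : ℤ) + 1 - 2 * i) ((2 * k : ℤ) - i),
        ichoose x₀ i * ichoose (y + 1) j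
          * ichoose ((ℓ : ℤ) - x₀ - (y + 1)) ((2 * k : ℤ) - i - j)
        = ichoose x₀ i * ∑ j ∈ Finset.Icc ((2 * k : ℤ) + 1 - 2 * i) ((2 * k : ℤ) - i),
            ichoose (y + 1) j * ichoose ((ℓ : ℤ) - x₀ - y - 1) ((2 * k : ℤ) - i - j) := by
      rw [Finset.mul_sum]
      refine Finset.sum_congr rfl fun j _ => by
        rw [show (ℓ : ℤ) - x₀ - ((y : ℤ) + 1) = (ℓ : ℤ) - x₀ - y - 1 by ring]; ring
    rw [l1, r1, step]
    have h1 : 0 ≤ ichoose ((2 * k : ℤ) + 1 - 2 * i - 1 + 1 - 1) 0 := ichoose_nonneg _ _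
    have h2 : 0 ≤ ichoose (y : ℤ) ((2 * k : ℤ) - 2 * i)
        * ichoose ((ℓ : ℤ) - x₀ - y - 1) (i - 1) :=
      mul_nonneg (ichoose_nonneg _ _) (ichoose_nonneg _ _)
    have h3 : 0 ≤ ichoose (x₀ : ℤ) i := ichoose_nonneg _ _
    nlinarith
  · intro i _ _
    exact Finset.sum_nonneg fun j _ =>
      mul_nonneg (mul_nonneg (ichoose_nonneg _ _) (ichoose_nonneg _ _)) (ichoose_nonneg _ _)
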